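/- For any embedding φ from instance I to instance I' and any i ≥ 0, there exists an embedding φ' extending φ from the rank-i oblivious chase of (I, Σ) to the rank-i oblivious chase of (I', Σ) that preserves the existential depth of terms: depth(v) = depth(φ'(v)) for every term v. -/

import Mathlib

namespace ChasePaper

/-- Rules: atoms are (predicate, list of variables). -/
structure Rule (P V : Type) where
  body : List (P × List V)
  head : List (P × List V)

/-- Terms appearing in the chase: constants, (instance) variables, and fresh
variables `z_{(σ,π)}` named by the rule, the existential variable, and a substitution. -/
inductive GTerm (P C V : Type) where
  | const : C → GTerm P C V
  | var   : V → GTerm P C V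
  | fresh : Rule P V → V → (V → GTerm P C V) → GTerm P C V

abbrev GAtom (P C V : Type) := P × List (GTerm P C V)

variable {P C V : Type}

def bodyVars (σ : Rule P V) : List V := σ.body.flatMap Prod.snd
def headVars (σ : Rule P V) : List V := σ.head.flatMap Prod.snd
def frontier [DecidableEq V] (σ : Rule P V) : List V :=
  (bodyVars σ).filter (· ∈ headVars σ)

/-- A rule is datalog if all head variables occur in the body. -/
def IsDatalog (σ : Rule P V) : Prop := ∀ v ∈ headVars σ, v ∈ bodyVars σ
/-- A rule is fully-existential if every head atom contains an existential variable. -/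
def IsFE (σ : Rule P V) : Prop := ∀ a ∈ σ.head, ∃ v ∈ a.2, v ∉ bodyVars σ

def applyAtom (π : V → GTerm P C V) (a : P × List V) : GAtom P C V :=
  (a.1, a.2.map π)

def restrictBody [DecidableEq V] (σ : Rule P V) (π : V → GTerm P C V) : V → GTerm P C V :=
  fun u => if u ∈ bodyVars σ then π u else GTerm.var u

def restrictFr [DecidableEq V] (σ : Rule P V) (π : V → GTerm P C V) : V → GTerm P C V :=
  fun u => if u ∈ frontier σ then π u else GTerm.var u

/-- Oblivious naming of fresh variables: `z_{(σ,π)}`. -/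
def extendO [DecidableEq V] (σ : Rule P V) (π : V → GTerm P C V) : V → GTerm P C V :=
  fun v => if v ∈ bodyVars σ then π v else GTerm.fresh σ v (restrictBody σ π)

/-- Semi-oblivious naming of fresh variables: `z_{(σ,π|fr(σ))}`. -/
def extendSO [DecidableEq V] (σ : Rule P V) (π : V → GTerm P C V) : V → GTerm P C V :=
  fun v => if v ∈ bodyVars σ then π v else GTerm.fresh σ v (restrictFr σ π)

def isTrigger (σ : Rule P V) (π : V → GTerm P C V) (S : Set (GAtom P C V)) : Prop :=
  ∀ a ∈ σ.body, applyAtom π a ∈ S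

/-- Breadth-first oblivious chase. -/
def ochase [DecidableEq V] (Rs : Set (Rule P V)) (I : Set (GAtom P C V)) : ℕ → Set (GAtom P C V)
  | 0 => I
  | i+1 => ochase Rs I i ∪
      {f | ∃ σ ∈ Rs, ∃ π, isTrigger σ π (ochase Rs I i) ∧ ∃ a ∈ σ.head, f = applyAtom (extendO σ π) a}

/-- Breadth-first semi-oblivious chase. -/
def sochase [DecidableEq V] (Rs : Set (Rule P V)) (I : Set (GAtom P C V)) : ℕ → Set (GAtom P C V)
  | 0 => I
  | i+1 => sochase Rs I i ∪
      {f | ∃ σ ∈ Rs, ∃ π, isTrigger σ π (sochase Rs I i) ∧ ∃ a ∈ σ.head, f = applyAtom (extendSO σ π) a}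

def ochaseFull [DecidableEq V] (Rs : Set (Rule P V)) (I : Set (GAtom P C V)) : Set (GAtom P C V) :=
  ⋃ i, ochase Rs I i
def sochaseFull [DecidableEq V] (Rs : Set (Rule P V)) (I : Set (GAtom P C V)) : Set (GAtom P C V) :=
  ⋃ i, sochase Rs I i

/-- Rank of a fact: the smallest breadth-first round at which it appears. -/
noncomputable def rankO [DecidableEq V] (Rs : Set (Rule P V)) (I : Set (GAtom P C V))
    (f : GAtom P C V) : ℕ := sInf {i | f ∈ ochase Rs I i}
noncomputable def rankSO [DecidableEq V] (Rs : Set (Rule P V)) (I : Set (GAtom P C V))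
    (f : GAtom P C V) : ℕ := sInf {i | f ∈ sochase Rs I i}

/-- Rank of a term: the smallest round at which some fact contains it. -/
noncomputable def trankO [DecidableEq V] (Rs : Set (Rule P V)) (I : Set (GAtom P C V))
    (t : GTerm P C V) : ℕ := sInf {i | ∃ f ∈ ochase Rs I i, t ∈ f.2}
noncomputable def trankSO [DecidableEq V] (Rs : Set (Rule P V)) (I : Set (GAtom P C V))
    (t : GTerm P C V) : ℕ := sInf {i | ∃ f ∈ sochase Rs I i, t ∈ f.2}

/-- Existential depth of a term. -/
def depth : GTerm P C V → ℕ
  | .const _ => 0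
  | .var _ => 0
  | .fresh σ _ π => 1 + List.foldr (fun v m => max (depth (π v)) m) 0 (bodyVars σ)

/-- Frontier existential depth of a term. -/
def frdepth [DecidableEq V] : GTerm P C V → ℕ
  | .const _ => 0
  | .var _ => 0
  | .fresh σ _ π =>
      if frontier σ = ([] : List V) then 1
      else 1 + List.foldr (fun v m => max (frdepth (π v)) m) 0 (frontier σ)

/-- Existential depth of a fact: max depth of its terms. -/
def depthF (f : GAtom P C V) : ℕ := List.foldr (fun t m => max (depth t) m) 0 f.2
def frdepthF [DecidableEq V] (f : GAtom P C V) : ℕ :=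
  List.foldr (fun t m => max (frdepth t) m) 0 f.2

/-- Active domain of a set of atoms. -/
def adom (S : Set (GAtom P C V)) : Set (GTerm P C V) := {t | ∃ f ∈ S, t ∈ f.2}

def mapAtom (h : GTerm P C V → GTerm P C V) (f : GAtom P C V) : GAtom P C V :=
  (f.1, f.2.map h)

/-- An embedding from `S` to `S'`: a substitution mapping every atom of `S` into `S'`. -/
def IsEmbedding (h : GTerm P C V → GTerm P C V) (S S' : Set (GAtom P C V)) : Prop :=
  ∀ f ∈ S, mapAtom h f ∈ S'

/-- `I` is an instance w.r.t. an arity function: finite, arity-correct,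
and using only constants and variables. -/
def IsInstance (ar : P → ℕ) (I : Set (GAtom P C V)) : Prop :=
  I.Finite ∧ ∀ f ∈ I, f.2.length = ar f.1 ∧
    ∀ t ∈ f.2, (∃ c, t = GTerm.const c) ∨ (∃ v, t = GTerm.var v)

def RuleOk (ar : P → ℕ) (σ : Rule P V) : Prop :=
  ∀ a ∈ σ.body ++ σ.head, a.2.length = ar a.1

/-- The critical instance over `ar` with special constant `a`. -/
def critical (ar : P → ℕ) (a : C) : Set (GAtom P C V) :=
  {f | f.2 = List.replicate (ar f.1) (GTerm.const a)}


/-- Lift an embedding to chase terms: acts as `φ` on constants/variables and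
renames fresh terms by pushing through the naming substitution (restricted to body vars). -/
def liftφ [DecidableEq V] (φ : GTerm P C V → GTerm P C V) : GTerm P C V → GTerm P C V
  | .const c => φ (.const c)
  | .var v => φ (.var v)
  | .fresh σ v μ =>
      .fresh σ v (fun u => if u ∈ bodyVars σ then liftφ φ (μ u) else .var u)

lemma foldr_max_congr {α : Type*} (g g' : α → ℕ) (l : List α)
    (h : ∀ x ∈ l, g x = g' x) :
    l.foldr (fun v m => max (g v) m) 0 = l.foldr (fun v m => max (g' v) m) 0 := by
  induction l with
  | nil => rfl
  | cons a l ih => simp only [List.foldr]; rw [h a (by simp), ih (fun x hx => h x (by simp [hx]))]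

lemma trigger_adom [DecidableEq V] {σ : Rule P V} {π : V → GTerm P C V}
    {S : Set (GAtom P C V)} (h : isTrigger σ π S) {u : V} (hu : u ∈ bodyVars σ) :
    π u ∈ adom S := by
  obtain ⟨a, ha, hu⟩ := List.mem_flatMap.1 hu
  exact ⟨applyAtom π a, h a ha, List.mem_map_of_mem (f := π) hu⟩

lemma lift_extendO [DecidableEq V] (φ : GTerm P C V → GTerm P C V) (σ : Rule P V)
    (π : V → GTerm P C V) (v : V) :
    liftφ φ (extendO σ π v) = extendO σ (fun u => liftφ φ (π u)) v := by
  unfold extendO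
  split
  · rfl
  · show GTerm.fresh σ v _ = GTerm.fresh σ v _
    congr 1
    funext u
    unfold restrictBody
    split <;> simp_all

lemma ochase_mono [DecidableEq V] (Rs : Set (Rule P V)) (I : Set (GAtom P C V)) (i : ℕ) :
    ochase Rs I i ⊆ ochase Rs I (i + 1) := fun f hf => Or.inl hf

lemma lift_main [DecidableEq V] (ar : P → ℕ) (Rs : Set (Rule P V))
    (I I' : Set (GAtom P C V)) (hI : IsInstance ar I) (hI' : IsInstance ar I')
    (φ : GTerm P C V → GTerm P C V) (hφ : IsEmbedding φ I I') (i : ℕ) :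
    IsEmbedding (liftφ φ) (ochase Rs I i) (ochase Rs I' i) ∧
      ∀ t ∈ adom (ochase Rs I i), depth t = depth (liftφ φ t) := by
  induction i with
  | zero =>
    constructor
    · intro f hf
      have hterms := (hI.2 f hf).2
      have : mapAtom (liftφ φ) f = mapAtom φ f := by
        unfold mapAtom
        congr 1
        apply List.map_congr_left
        intro t ht
        rcases hterms t ht with ⟨c, rfl⟩ | ⟨v, rfl⟩ <;> rfl
      rw [this]
      exact hφ f hf
    · rintro t ⟨f, hf, ht⟩
      have hterms := (hI.2 f hf).2
      have hφf : mapAtom φ f ∈ I' := hφ f hf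
      have hφt : φ t ∈ (mapAtom φ f).2 := List.mem_map_of_mem (f := φ) ht
      have hφterms := (hI'.2 _ hφf).2
      rcases hterms t ht with ⟨c, rfl⟩ | ⟨v, rfl⟩ <;>
        · show depth _ = depth (φ _)
          rcases hφterms _ hφt with ⟨c', hc⟩ | ⟨v', hv⟩ <;> simp_all [depth]
  | succ i ih =>
    obtain ⟨ihE, ihD⟩ := ih
    have hEmb : IsEmbedding (liftφ φ) (ochase Rs I (i + 1)) (ochase Rs I' (i + 1)) := by
      rintro f (hf | ⟨σ, hσ, π, htrig, a, ha, rfl⟩)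
      · exact Or.inl (ihE f hf)
      · refine Or.inr ⟨σ, hσ, fun u => liftφ φ (π u), ?_, a, ha, ?_⟩
        · intro b hb
          have := ihE _ (htrig b hb)
          have heq : applyAtom (fun u => liftφ φ (π u)) b = mapAtom (liftφ φ) (applyAtom π b) := by
            unfold applyAtom mapAtom
            simp [List.map_map, Function.comp]
          rw [heq]; exact this
        · unfold applyAtom mapAtom
          simp only [List.map_map]
          congr 1
          apply List.map_congr_left
          intro v _
          exact lift_extendO φ σ π v
    refine ⟨hEmb, ?_⟩
    rintro t ⟨f, hf | ⟨σ, hσ, π, htrig, a, ha, rfl⟩, ht⟩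
    · exact ihD t ⟨f, hf, ht⟩
    · obtain ⟨v, hv, rfl⟩ := List.mem_map.1 ht
      unfold extendO
      split
      · exact ihD _ (trigger_adom htrig (by assumption))
      · show depth _ = depth (GTerm.fresh σ v _)
        simp only [depth]
        congr 1
        apply foldr_max_congr
        intro u hu
        rw [if_pos hu]
        unfold restrictBody
        rw [if_pos hu]
        exact ihD _ (trigger_adom htrig hu)

/-- any embedding `φ : I → I'` extends, for every rank `i`, to an
embedding `φ'` between the rank-`i` oblivious chases that preserves the
existential depth of terms. -/
theorem statement3 {P C V : Type} [DecidableEq V] (ar : P → ℕ)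
    (Rs : Set (Rule P V)) (I I' : Set (GAtom P C V))
    (hI : IsInstance ar I) (hI' : IsInstance ar I')
    (φ : GTerm P C V → GTerm P C V) (hφ : IsEmbedding φ I I') (i : ℕ) :
    ∃ φ' : GTerm P C V → GTerm P C V,
      (∀ t ∈ adom I, φ' t = φ t) ∧
      IsEmbedding φ' (ochase Rs I i) (ochase Rs I' i) ∧
      ∀ t ∈ adom (ochase Rs I i), depth t = depth (φ' t) := by
  obtain ⟨hE, hD⟩ := lift_main ar Rs I I' hI hI' φ hφ i
  refine ⟨liftφ φ, ?_, hE, hD⟩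
  rintro t ⟨f, hf, ht⟩
  rcases (hI.2 f hf).2 t ht with ⟨c, rfl⟩ | ⟨v, rfl⟩ <;> rfl

end ChasePaper
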